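/- Let m = (m₁,m₂) ∈ ℕ² and let Γ^{(m)}_□ = {γ ∈ ℤ² : 0 ≤ γ₁ ≤ 2m₁, −m₂ < γ₂ ≤ m₂, γ₁+γ₂ even}. Let 𝒻 : 𝔻 → ℂ be continuous on the unit disk, let f(i) = 𝒻(x^{(m)}_i) for i ∈ I^{(m)}, and let P^{(m)}_f be the unique interpolant of f in Π^{(m)}_□ = span{X_γ : γ ∈ Γ^{(m)}_□}. Then P^{(m)}_f is continuous at the center: P^{(m)}_f(0,θ) = 𝒻(0,0) for all θ ∈ [−π,π], so that P^{(m)}_f defines a continuous function on 𝔻. -/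

import Mathlib

noncomputable section

/-- The rhodonea curve `ρ^{(m)}_α`. -/
def rho (m₁ m₂ : ℕ) (α : ℝ) (t : ℝ) : ℝ × ℝ :=
  (Real.cos (m₂ * t) * Real.cos (m₁ * t - α * Real.pi),
   Real.cos (m₂ * t) * Real.sin (m₁ * t - α * Real.pi))

/-- The sampling parameters `t^{(m)}_l = l π / (2 m₁ m₂)`. -/
def tSample (m₁ m₂ : ℕ) (l : ℕ) : ℝ := l * Real.pi / (2 * m₁ * m₂)

/-- The set `S^{(m)}(t)` of parameters in `[0, 2π)` hitting the same point as `t`. -/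
def Sset (m₁ m₂ : ℕ) (α t : ℝ) : Set ℝ :=
  {s | s ∈ Set.Ico (0 : ℝ) (2 * Real.pi) ∧ rho m₁ m₂ α s = rho m₁ m₂ α t}

/-- The sample point set `LS^{(m)}_α` along the rhodonea curve. -/
def LSa (m₁ m₂ : ℕ) (α : ℝ) : Set (ℝ × ℝ) :=
  {p | ∃ l : ℕ, l < 4 * m₁ * m₂ ∧ p = rho m₁ m₂ α (tSample m₁ m₂ l)}

/-- The nodal index set `I^{(m)}` as a set. -/
def Idx (m₁ m₂ : ℕ) : Set (ℤ × ℤ) :=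
  {i | 0 ≤ i.1 ∧ i.1 ≤ (m₁ : ℤ) ∧ -(2 * (m₂ : ℤ)) < i.2 ∧ i.2 ≤ 2 * (m₂ : ℤ) ∧
       (i.1 = (m₁ : ℤ) → i.2 ≤ 0) ∧ Even (i.1 + i.2)}

/-- The nodal index set `I^{(m)}` as a finset. -/
def IdxF (m₁ m₂ : ℕ) : Finset (ℤ × ℤ) :=
  (Finset.Icc (0 : ℤ) (m₁ : ℤ) ×ˢ Finset.Ioc (-(2 * (m₂ : ℤ))) (2 * (m₂ : ℤ))).filter
    (fun i => (i.1 = (m₁ : ℤ) → i.2 ≤ 0) ∧ Even (i.1 + i.2))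

/-- Radial coordinate `r^{(m₁)}_{i₁} = cos(i₁ π / (2 m₁))`. -/
def rI (m₁ : ℕ) (i₁ : ℤ) : ℝ := Real.cos (i₁ * Real.pi / (2 * m₁))

/-- Angular coordinate `θ^{(m₂)}_{i₂} = i₂ π / (2 m₂)`. -/
def thetaI (m₂ : ℕ) (i₂ : ℤ) : ℝ := i₂ * Real.pi / (2 * m₂)

/-- The rhodonea node `x^{(m)}_i` in Cartesian coordinates. -/
def node (m₁ m₂ : ℕ) (i : ℤ × ℤ) : ℝ × ℝ :=
  (rI m₁ i.1 * Real.cos (thetaI m₂ i.2), rI m₁ i.1 * Real.sin (thetaI m₂ i.2))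

/-- The rhodonea node set `LS^{(m)}`. -/
def LS (m₁ m₂ : ℕ) : Set (ℝ × ℝ) := node m₁ m₂ '' Idx m₁ m₂

/-- Chebyshev polynomial of the first kind, `T_n(r) = cos(n arccos r)`. -/
def chebT (n : ℕ) (r : ℝ) : ℝ := Real.cos (n * Real.arccos r)

/-- The closed unit disk `𝔻 ⊆ ℝ²`. -/
def closedDisk : Set (ℝ × ℝ) := {x | x.1 ^ 2 + x.2 ^ 2 ≤ 1}

/-- The weights `w^{(m)}_i`. -/
def wgt (m₁ m₂ : ℕ) (i : ℤ × ℤ) : ℝ :=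
  if i.1 = 0 then 1 / (4 * m₁ * m₂) else 2 / (4 * m₁ * m₂)

/-- The discrete basis functions `χ^{(m)}_γ(i)`. -/
def chi (m₁ m₂ : ℕ) (γ i : ℤ × ℤ) : ℂ :=
  (Real.cos (γ.1 * i.1 * Real.pi / (2 * m₁)) : ℂ) *
    Complex.exp (Complex.I * (γ.2 * i.2 * Real.pi / (2 * m₂)))

/-- The discrete inner product `⟨f, g⟩_w` on `L(I^{(m)})`. -/
def innerW (m₁ m₂ : ℕ) (f g : ℤ × ℤ → ℂ) : ℂ :=
  ∑ i ∈ IdxF m₁ m₂, (wgt m₁ m₂ i : ℂ) * f i * (starRingEnd ℂ) (g i)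

/-- The rectangular spectral index set `Γ^{(m)}_□`. -/
def GammaSq (m₁ m₂ : ℕ) : Finset (ℤ × ℤ) :=
  (Finset.Icc (0 : ℤ) (2 * (m₁ : ℤ)) ×ˢ Finset.Ioc (-(m₂ : ℤ)) (m₂ : ℤ)).filter
    (fun γ => Even (γ.1 + γ.2))

/-- The full frequency box `K^{(m)}`. -/
def KSet (m₁ m₂ : ℕ) : Finset (ℤ × ℤ) :=
  Finset.Icc (0 : ℤ) (2 * (m₁ : ℤ)) ×ˢ Finset.Ioc (-(2 * (m₂ : ℤ))) (2 * (m₂ : ℤ))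

/-- The flip (glide-reflection) operator `γ ↦ γ*` on `K^{(m)}`, with second
coordinate `(γ₂ + 2m₂) mod 4m₂` taken in `(-2m₂, 2m₂]`. -/
def flipOp (m₁ m₂ : ℕ) (γ : ℤ × ℤ) : ℤ × ℤ :=
  (2 * (m₁ : ℤ) - γ.1, if γ.2 ≤ 0 then γ.2 + 2 * (m₂ : ℤ) else γ.2 - 2 * (m₂ : ℤ))

/-- `Γ` is a spectral index set for `I^{(m)}`: a subset of `K^{(m)}` satisfying the
parity condition whose functions `χ^{(m)}_γ` form an orthogonal basis of `L(I^{(m)})`. -/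
def IsSpectral (m₁ m₂ : ℕ) (Γ : Finset (ℤ × ℤ)) : Prop :=
  Γ ⊆ KSet m₁ m₂ ∧ (∀ γ ∈ Γ, Even (γ.1 + γ.2)) ∧
  (∀ γ ∈ Γ, ∀ γ' ∈ Γ, γ ≠ γ' → innerW m₁ m₂ (chi m₁ m₂ γ) (chi m₁ m₂ γ') = 0) ∧
  LinearIndependent ℂ (fun γ : ↥Γ => fun i : ↥(IdxF m₁ m₂) => chi m₁ m₂ γ.1 i.1) ∧
  Submodule.span ℂ
    (Set.range (fun γ : ↥Γ => fun i : ↥(IdxF m₁ m₂) => chi m₁ m₂ γ.1 i.1)) = ⊤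

/-- The real discrete basis functions `χ^{(m)}_{ℛ,γ}(i)` (for `γ ∈ Γ`). -/
def chiR (m₁ m₂ : ℕ) (Γ : Finset (ℤ × ℤ)) (γ i : ℤ × ℤ) : ℝ :=
  Real.cos (γ.1 * i.1 * Real.pi / (2 * m₁)) *
    (if ((γ.1, -γ.2) ∈ Γ ∧ 0 ≤ γ.2) ∨ ((γ.1, -γ.2) ∉ Γ ∧ γ.1 ≤ (m₁ : ℤ))
     then Real.cos (γ.2 * i.2 * Real.pi / (2 * m₂))
     else Real.sin (γ.2 * i.2 * Real.pi / (2 * m₂)))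

/-- The Chebyshev–Fourier basis functions `X_γ(r, θ) = T_{γ₁}(r) e^{i γ₂ θ}`. -/
def Xfun (γ : ℤ × ℤ) (p : ℝ × ℝ) : ℂ :=
  (Real.cos (γ.1 * Real.arccos p.1) : ℂ) * Complex.exp (Complex.I * (γ.2 * p.2))

/-- The real Chebyshev–Fourier basis functions `X_{ℛ,γ}` (for `γ ∈ Γ`). -/
def XRfun (m₁ : ℕ) (Γ : Finset (ℤ × ℤ)) (γ : ℤ × ℤ) (p : ℝ × ℝ) : ℝ :=
  Real.cos (γ.1 * Real.arccos p.1) *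
    (if ((γ.1, -γ.2) ∈ Γ ∧ 0 ≤ γ.2) ∨ ((γ.1, -γ.2) ∉ Γ ∧ γ.1 ≤ (m₁ : ℤ))
     then Real.cos (γ.2 * p.2) else Real.sin (γ.2 * p.2))

/-- The Lagrange functions `L^{(m)}_i`. -/
def Lag (m₁ m₂ : ℕ) (Γ : Finset (ℤ × ℤ)) (i : ℤ × ℤ) (p : ℝ × ℝ) : ℂ :=
  (wgt m₁ m₂ i : ℂ) *
    ∑ γ ∈ Γ, ((starRingEnd ℂ) (chi m₁ m₂ γ i) /
      innerW m₁ m₂ (chi m₁ m₂ γ) (chi m₁ m₂ γ)) * Xfun γ p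

/-- The complex-valued version of `X_{ℛ,γ}`. -/
def XRc (m₁ : ℕ) (Γ : Finset (ℤ × ℤ)) (γ : ℤ × ℤ) (p : ℝ × ℝ) : ℂ :=
  (XRfun m₁ Γ γ p : ℂ)

/-- The real Lagrange functions `L^{(m)}_{ℛ,i}`. -/
def LagR (m₁ m₂ : ℕ) (Γ : Finset (ℤ × ℤ)) (i : ℤ × ℤ) (p : ℝ × ℝ) : ℂ :=
  (wgt m₁ m₂ i : ℂ) *
    ∑ γ ∈ Γ, ((chiR m₁ m₂ Γ γ i /
        (∑ j ∈ IdxF m₁ m₂, wgt m₁ m₂ j * chiR m₁ m₂ Γ γ j ^ 2) : ℝ) : ℂ) * XRc m₁ Γ γ p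

end


section AuxTheorem81

open Complex Polynomial

private lemma aux_cos_odd_int (n : ℤ) (hn : Odd n) : Real.cos (n * (Real.pi / 2)) = 0 := by
  obtain ⟨k, rfl⟩ := hn
  have h : ((2 * k + 1 : ℤ) : ℝ) * (Real.pi / 2) = k * Real.pi + Real.pi / 2 := by
    push_cast; ring
  rw [h, Real.cos_add_pi_div_two, Real.sin_int_mul_pi, neg_zero]

end AuxTheorem81

/-- Theorem 8.1: for a continuous function on the disk, the interpolant in
`Π^{(m)}_□` is constant (equal to the center value) on the line `r = 0` and hence
defines a continuous function on the closed disk. -/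
theorem interpolant_continuous_at_center (m₁ m₂ : ℕ) (hm₁ : 0 < m₁) (hm₂ : 0 < m₂)
    (F : ℝ × ℝ → ℂ) (hF : ContinuousOn F closedDisk) (P : ℝ × ℝ → ℂ)
    (hPmem : P ∈ Submodule.span ℂ (Xfun '' (GammaSq m₁ m₂ : Set (ℤ × ℤ))))
    (hInterp : ∀ i ∈ IdxF m₁ m₂, P (rI m₁ i.1, thetaI m₂ i.2) = F (node m₁ m₂ i)) :
    (∀ θ ∈ Set.Icc (-Real.pi) Real.pi, P (0, θ) = F (0, 0)) ∧
    ∃ G : ℝ × ℝ → ℂ, ContinuousOn G closedDisk ∧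
      ∀ r ∈ Set.Icc (0 : ℝ) 1, ∀ θ ∈ Set.Ioc (-Real.pi) Real.pi,
        G (r * Real.cos θ, r * Real.sin θ) = P (r, θ) := by
  classical
  have hm₁R : (m₁ : ℝ) ≠ 0 := Nat.cast_ne_zero.mpr hm₁.ne'
  have hm₂R : (m₂ : ℝ) ≠ 0 := Nat.cast_ne_zero.mpr hm₂.ne'
  -- extract coefficients
  rw [Finsupp.mem_span_image_iff_linearCombination] at hPmem
  obtain ⟨c, hcs, hcP⟩ := hPmem
  have hcs' : c.support ⊆ GammaSq m₁ m₂ := by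
    simpa [Finsupp.mem_supported] using hcs
  have hP : ∀ p, P p = ∑ γ ∈ GammaSq m₁ m₂, c γ * Xfun γ p := by
    intro p
    have hPfun : P = ∑ γ ∈ GammaSq m₁ m₂, c γ • Xfun γ := by
      rw [← hcP, Finsupp.linearCombination_apply, Finsupp.sum]
      exact Finset.sum_subset hcs' (by
        intro γ _ hγ
        rw [Finsupp.notMem_support_iff.mp hγ, zero_smul])
    rw [hPfun]
    simp [Finset.sum_apply]
  -- membership facts for GammaSq
  have hGam : ∀ γ ∈ GammaSq m₁ m₂,
      (0 ≤ γ.1 ∧ γ.1 ≤ 2 * (m₁ : ℤ)) ∧ (-(m₂ : ℤ) < γ.2 ∧ γ.2 ≤ (m₂ : ℤ)) ∧ Even (γ.1 + γ.2) := by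
    intro γ hγ
    simp only [GammaSq, Finset.mem_filter, Finset.mem_product, Finset.mem_Icc,
      Finset.mem_Ioc] at hγ
    tauto
  -- the interpolation conditions at the m₂ center nodes
  have hnode : ∀ l : ℕ, l < m₂ →
      P (0, thetaI m₂ (-(2 * (l : ℤ)) - (m₁ : ℤ) % 2)) = F (0, 0) := by
    intro l hl
    have hlZ : (l : ℤ) < (m₂ : ℤ) := by exact_mod_cast hl
    have hmem : ((m₁ : ℤ), -(2 * (l : ℤ)) - (m₁ : ℤ) % 2) ∈ IdxF m₁ m₂ := by
      simp only [IdxF, Finset.mem_filter, Finset.mem_product, Finset.mem_Icc, Finset.mem_Ioc]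
      refine ⟨⟨⟨by positivity, le_refl _⟩, by omega, by omega⟩, fun _ => by omega, ?_⟩
      rw [Int.even_iff]
      omega
    have h := hInterp _ hmem
    have hrI : rI m₁ (m₁ : ℤ) = 0 := by
      have harg : ((m₁ : ℤ) : ℝ) * Real.pi / (2 * (m₁ : ℕ)) = Real.pi / 2 := by
        field_simp
        norm_cast
      rw [rI, harg, Real.cos_pi_div_two]
    have hnd : node m₁ m₂ ((m₁ : ℤ), -(2 * (l : ℤ)) - (m₁ : ℤ) % 2) = (0, 0) := by
      simp [node, hrI]
    rw [hrI] at h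
    rw [hnd] at h
    exact h
  -- group the expansion of P(0,θ) by angular frequency
  set d : ℤ → ℂ := fun k => ∑ γ ∈ (GammaSq m₁ m₂).filter (fun γ => γ.2 = k),
    c γ * (Real.cos (γ.1 * (Real.pi / 2)) : ℂ) with hd
  have hP0 : ∀ θ : ℝ, P (0, θ) =
      ∑ k ∈ Finset.Ioc (-(m₂ : ℤ)) (m₂ : ℤ), d k * Complex.exp (Complex.I * (k * θ)) := by
    intro θ
    rw [hP (0, θ)]
    rw [← Finset.sum_fiberwise_of_maps_to (g := fun γ : ℤ × ℤ => γ.2)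
      (t := Finset.Ioc (-(m₂ : ℤ)) (m₂ : ℤ))
      (fun γ hγ => Finset.mem_Ioc.mpr (hGam γ hγ).2.1)]
    refine Finset.sum_congr rfl fun k hk => ?_
    rw [hd]
    rw [Finset.sum_mul]
    refine Finset.sum_congr rfl fun γ hγ => ?_
    have hγ2 : γ.2 = k := by
      simpa using (Finset.mem_filter.mp hγ).2
    simp only [Xfun, Real.arccos_zero]
    rw [hγ2]
    push_cast
    ring
  have hd_odd : ∀ k : ℤ, ¬ Even k → d k = 0 := by
    intro k hk
    refine Finset.sum_eq_zero fun γ hγ => ?_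
    rw [Finset.mem_filter] at hγ
    obtain ⟨hγG, hγ2⟩ := hγ
    have heven := (hGam γ hγG).2.2
    have hodd : Odd γ.1 := by
      rw [Int.even_iff] at heven hk
      rw [Int.odd_iff]
      omega
    rw [aux_cos_odd_int γ.1 hodd]
    simp
  -- reindex the even frequencies by range m₂
  set b : ℤ := (m₂ : ℤ) - (m₂ : ℤ) % 2 with hb
  have hsum_even : ∀ g : ℤ → ℂ,
      ∑ k ∈ Finset.Ioc (-(m₂ : ℤ)) (m₂ : ℤ), d k * g k
        = ∑ j ∈ Finset.range m₂, d (b - 2 * (j : ℤ)) * g (b - 2 * (j : ℤ)) := by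
    intro g
    rw [← Finset.sum_filter_add_sum_filter_not (Finset.Ioc (-(m₂ : ℤ)) (m₂ : ℤ))
      (fun k => Even k)]
    have h2 : ∑ k ∈ (Finset.Ioc (-(m₂ : ℤ)) (m₂ : ℤ)).filter (fun k => ¬ Even k),
        d k * g k = 0 :=
      Finset.sum_eq_zero fun k hk => by
        rw [hd_odd k (Finset.mem_filter.mp hk).2, zero_mul]
    rw [h2, add_zero]
    refine Finset.sum_nbij' (fun k => ((b - k) / 2).toNat) (fun j => b - 2 * (j : ℤ))
      ?_ ?_ ?_ ?_ ?_
    · intro k hk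
      simp only [Finset.mem_filter, Finset.mem_Ioc] at hk
      obtain ⟨⟨hk1, hk2⟩, hk3⟩ := hk
      rw [Int.even_iff] at hk3
      simp only [Finset.mem_range]
      omega
    · intro j hj
      simp only [Finset.mem_range] at hj
      have hjZ : (j : ℤ) < (m₂ : ℤ) := by exact_mod_cast hj
      simp only [Finset.mem_filter, Finset.mem_Ioc]
      refine ⟨⟨by omega, by omega⟩, ?_⟩
      rw [Int.even_iff]
      omega
    · intro k hk
      simp only [Finset.mem_filter, Finset.mem_Ioc] at hk
      obtain ⟨⟨hk1, hk2⟩, hk3⟩ := hk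
      rw [Int.even_iff] at hk3
      omega
    · intro j hj
      simp only [Finset.mem_range] at hj
      have hjZ : (j : ℤ) < (m₂ : ℤ) := by exact_mod_cast hj
      omega
    · intro k hk
      simp only [Finset.mem_filter, Finset.mem_Ioc] at hk
      obtain ⟨⟨hk1, hk2⟩, hk3⟩ := hk
      rw [Int.even_iff] at hk3
      have hkk : b - 2 * ((((b - k) / 2).toNat : ℕ) : ℤ) = k := by omega
      rw [hkk]
  have hP0' : ∀ θ : ℝ, P (0, θ) = ∑ j ∈ Finset.range m₂,
      d (b - 2 * (j : ℤ)) *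
        Complex.exp (Complex.I * (((b - 2 * (j : ℤ) : ℤ) : ℂ) * (θ : ℂ))) := by
    intro θ
    rw [hP0 θ]
    exact hsum_even (fun k => Complex.exp (Complex.I * ((k : ℂ) * (θ : ℂ))))
  -- the polynomial Q
  set j₀ : ℕ := (b / 2).toNat with hj₀def
  have hj₀lt : j₀ < m₂ := by
    have : (1 : ℤ) ≤ (m₂ : ℤ) := by exact_mod_cast hm₂
    omega
  have hj₀b : b - 2 * (j₀ : ℤ) = 0 := by
    have : (1 : ℤ) ≤ (m₂ : ℤ) := by exact_mod_cast hm₂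
    omega
  set Q : Polynomial ℂ := (∑ j ∈ Finset.range m₂,
      Polynomial.C (d (b - 2 * (j : ℤ))) * Polynomial.X ^ j)
    - Polynomial.C (F (0, 0)) * Polynomial.X ^ j₀ with hQ
  have hQeval : ∀ z : ℂ, Q.eval z =
      (∑ j ∈ Finset.range m₂, d (b - 2 * (j : ℤ)) * z ^ j) - F (0, 0) * z ^ j₀ := by
    intro z
    simp [hQ, Polynomial.eval_finset_sum]
  have hterm : ∀ (θ : ℝ) (j : ℕ),
      Complex.exp (Complex.I * ((b : ℂ) * (θ : ℂ))) * Complex.exp (Complex.I * (-2 * θ)) ^ j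
        = Complex.exp (Complex.I * (((b - 2 * (j : ℤ) : ℤ) : ℂ) * θ)) := by
    intro θ j
    rw [← Complex.exp_nat_mul, ← Complex.exp_add]
    congr 1
    push_cast
    ring
  have hkey : ∀ θ : ℝ, P (0, θ) - F (0, 0) =
      Complex.exp (Complex.I * ((b : ℂ) * (θ : ℂ))) *
        Q.eval (Complex.exp (Complex.I * (-2 * θ))) := by
    intro θ
    rw [hP0' θ, hQeval]
    rw [mul_sub, Finset.mul_sum]
    congr 1
    · refine Finset.sum_congr rfl fun j hj => ?_
      rw [show Complex.exp (Complex.I * ((b : ℂ) * (θ : ℂ))) *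
          (d (b - 2 * (j : ℤ)) * Complex.exp (Complex.I * (-2 * θ)) ^ j)
        = d (b - 2 * (j : ℤ)) * (Complex.exp (Complex.I * ((b : ℂ) * (θ : ℂ))) *
          Complex.exp (Complex.I * (-2 * θ)) ^ j) by ring, hterm θ j]
    · rw [show Complex.exp (Complex.I * ((b : ℂ) * (θ : ℂ))) *
          (F (0, 0) * Complex.exp (Complex.I * (-2 * θ)) ^ j₀)
        = F (0, 0) * (Complex.exp (Complex.I * ((b : ℂ) * (θ : ℂ))) *
          Complex.exp (Complex.I * (-2 * θ)) ^ j₀) by ring, hterm θ j₀, hj₀b]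
      norm_num
  -- the roots of Q
  have hroot : ∀ l : ℕ, l < m₂ →
      Q.eval (Complex.exp (Complex.I *
        ((((2 * (l : ℤ) + (m₁ : ℤ) % 2 : ℤ) : ℝ) * Real.pi / m₂ : ℝ) : ℂ))) = 0 := by
    intro l hl
    have h1 := hnode l hl
    have h2 := hkey (thetaI m₂ (-(2 * (l : ℤ)) - (m₁ : ℤ) % 2))
    rw [h1, sub_self] at h2
    have hang : (-2 : ℂ) * ((thetaI m₂ (-(2 * (l : ℤ)) - (m₁ : ℤ) % 2) : ℝ) : ℂ)
        = ((((2 * (l : ℤ) + (m₁ : ℤ) % 2 : ℤ) : ℝ) * Real.pi / m₂ : ℝ) : ℂ) := by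
      rw [show ((-2 : ℂ)) * ((thetaI m₂ (-(2 * (l : ℤ)) - (m₁ : ℤ) % 2) : ℝ) : ℂ)
          = (((-2 : ℝ) * thetaI m₂ (-(2 * (l : ℤ)) - (m₁ : ℤ) % 2) : ℝ) : ℂ) by push_cast; ring]
      congr 1
      rw [thetaI]
      push_cast
      field_simp
      ring
    rw [hang] at h2
    rcases mul_eq_zero.mp h2.symm with h3 | h3
    · exact absurd h3 (Complex.exp_ne_zero _)
    · exact h3
  have hQ0 : Q = 0 := by
    refine Polynomial.eq_zero_of_natDegree_lt_card_of_eval_eq_zero Q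
      (f := fun l : Fin m₂ => Complex.exp (Complex.I *
        ((((2 * ((l : ℕ) : ℤ) + (m₁ : ℤ) % 2 : ℤ) : ℝ) * Real.pi / m₂ : ℝ) : ℂ)))
      ?_ (fun l => hroot l l.2) ?_
    · intro l l' hll
      rw [Complex.exp_eq_exp_iff_exists_int] at hll
      obtain ⟨n, hn⟩ := hll
      have hn' : Complex.I * ((((2 * ((l : ℕ) : ℤ) + (m₁ : ℤ) % 2 : ℤ) : ℝ) * Real.pi / m₂ : ℝ) : ℂ)
          = Complex.I * (((((2 * ((l' : ℕ) : ℤ) + (m₁ : ℤ) % 2 : ℤ) : ℝ) * Real.pi / m₂ : ℝ) : ℂ)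
            + (n : ℂ) * (2 * Real.pi)) := by
        rw [hn]; ring
      have hre := mul_left_cancel₀ Complex.I_ne_zero hn'
      have hreR : (((2 * ((l : ℕ) : ℤ) + (m₁ : ℤ) % 2 : ℤ) : ℝ) * Real.pi / m₂ : ℝ)
          = (((2 * ((l' : ℕ) : ℤ) + (m₁ : ℤ) % 2 : ℤ) : ℝ) * Real.pi / m₂ : ℝ)
            + (n : ℝ) * (2 * Real.pi) := by exact_mod_cast hre
      have hπ := Real.pi_ne_zero
      field_simp at hreR
      have h5 : (2 * ((l : ℕ) : ℝ) + (((m₁ : ℤ) % 2 : ℤ) : ℝ)) * Real.pi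
          = (2 * ((l' : ℕ) : ℝ) + (((m₁ : ℤ) % 2 : ℤ) : ℝ) + (n : ℝ) * (2 * (m₂ : ℕ)))
            * Real.pi := by push_cast at hreR; linear_combination Real.pi * hreR
      have h4 := mul_right_cancel₀ hπ h5
      have h6 : (2 * ((l : ℕ) : ℤ) + (m₁ : ℤ) % 2)
          = (2 * ((l' : ℕ) : ℤ) + (m₁ : ℤ) % 2) + n * (2 * m₂) := by exact_mod_cast h4
      have hlZ : ((l : ℕ) : ℤ) < m₂ := by exact_mod_cast l.2
      have hl'Z : ((l' : ℕ) : ℤ) < m₂ := by exact_mod_cast l'.2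
      have hlZ0 : (0 : ℤ) ≤ ((l : ℕ) : ℤ) := by positivity
      have hl'Z0 : (0 : ℤ) ≤ ((l' : ℕ) : ℤ) := by positivity
      have hm₂Z : (1 : ℤ) ≤ m₂ := by exact_mod_cast hm₂
      have hn0 : n = 0 := by
        rcases lt_trichotomy n 0 with h | h | h
        · exfalso
          have hn1 : n ≤ -1 := by omega
          have hmul : n * (2 * (m₂ : ℤ)) ≤ (-1) * (2 * (m₂ : ℤ)) :=
            mul_le_mul_of_nonneg_right hn1 (by omega)
          linarith
        · exact h
        · exfalso
          have hn1 : (1 : ℤ) ≤ n := by omega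
          have hmul : (1 : ℤ) * (2 * (m₂ : ℤ)) ≤ n * (2 * (m₂ : ℤ)) :=
            mul_le_mul_of_nonneg_right hn1 (by omega)
          linarith
      rw [hn0, zero_mul, add_zero] at h6
      apply Fin.ext
      have hfin : ((l : ℕ) : ℤ) = ((l' : ℕ) : ℤ) := by omega
      exact_mod_cast hfin
    · rw [Fintype.card_fin]
      have h1 : Q.natDegree ≤ m₂ - 1 := by
        refine le_trans (Polynomial.natDegree_sub_le _ _) (max_le ?_ ?_)
        · refine Polynomial.natDegree_sum_le_of_forall_le _ _ fun j hj => ?_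
          refine le_trans (Polynomial.natDegree_C_mul_X_pow_le _ _) ?_
          have := Finset.mem_range.mp hj
          omega
        · refine le_trans (Polynomial.natDegree_C_mul_X_pow_le _ _) ?_
          omega
      omega
  have hpart1 : ∀ θ : ℝ, P (0, θ) = F (0, 0) := by
    intro θ
    have h := hkey θ
    rw [hQ0] at h
    simp only [Polynomial.eval_zero, mul_zero] at h
    exact sub_eq_zero.mp h
  have hstar : ∀ θ : ℝ, ∑ γ ∈ GammaSq m₁ m₂,
      c γ * (Real.cos (γ.1 * (Real.pi / 2)) : ℂ) *
        Complex.exp (Complex.I * ((γ.2 : ℂ) * (θ : ℂ))) = F (0, 0) := by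
    intro θ
    rw [← hpart1 θ, hP (0, θ)]
    refine Finset.sum_congr rfl fun γ _ => ?_
    simp only [Xfun, Real.arccos_zero]
    ring
  set zc : ℝ × ℝ → ℂ := fun p => (p.1 : ℂ) + (p.2 : ℂ) * Complex.I with hzc
  have hzc_cont : Continuous zc := by
    rw [hzc]
    exact (Complex.continuous_ofReal.comp continuous_fst).add
      ((Complex.continuous_ofReal.comp continuous_snd).mul continuous_const)
  set u : ℝ × ℝ → ℂ := fun p => if zc p = 0 then 1 else zc p / (‖zc p‖ : ℂ)
    with hu
  have hu_norm : ∀ p, ‖u p‖ = 1 := by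
    intro p
    by_cases h : zc p = 0
    · simp [hu, h]
    · simp only [hu, if_neg h]
      rw [norm_div, Complex.norm_real, norm_norm,
        div_self (norm_ne_zero_iff.mpr h)]
  have hupow : ∀ p : ℝ × ℝ, ∃ θ : ℝ, ∀ k : ℤ,
      u p ^ k = Complex.exp (Complex.I * ((k : ℂ) * (θ : ℂ))) := by
    intro p
    by_cases h : zc p = 0
    · refine ⟨0, fun k => ?_⟩
      simp [hu, h]
    · refine ⟨Complex.arg (zc p), fun k => ?_⟩
      have hune : u p = Complex.exp ((Complex.arg (zc p) : ℂ) * Complex.I) := by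
        simp only [hu, if_neg h]
        rw [div_eq_iff (Complex.ofReal_ne_zero.mpr (norm_ne_zero_iff.mpr h))]
        conv_lhs => rw [← Complex.norm_mul_exp_arg_mul_I (zc p)]
        ring
      rw [hune, ← Complex.exp_int_mul]
      congr 1
      ring
  set G : ℝ × ℝ → ℂ := fun p => F (0, 0) + ∑ γ ∈ GammaSq m₁ m₂,
    c γ * ((Real.cos (γ.1 * Real.arccos (‖zc p‖))
        - Real.cos (γ.1 * (Real.pi / 2)) : ℝ) : ℂ) * u p ^ γ.2 with hG
  have hstar' : ∀ p : ℝ × ℝ, ∑ γ ∈ GammaSq m₁ m₂,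
      c γ * (Real.cos (γ.1 * (Real.pi / 2)) : ℂ) * u p ^ γ.2 = F (0, 0) := by
    intro p
    obtain ⟨θ, hθ⟩ := hupow p
    rw [← hstar θ]
    exact Finset.sum_congr rfl fun γ _ => by rw [hθ γ.2]
  have hGnat : ∀ p, G p = ∑ γ ∈ GammaSq m₁ m₂,
      c γ * (Real.cos (γ.1 * Real.arccos (‖zc p‖)) : ℂ) * u p ^ γ.2 := by
    intro p
    rw [hG]
    dsimp only
    rw [← hstar' p, ← Finset.sum_add_distrib]
    refine Finset.sum_congr rfl fun γ _ => ?_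
    push_cast
    ring
  have habs00 : ‖zc ((0:ℝ), (0:ℝ))‖ = 0 := by
    rw [hzc]
    simp
  have hG0 : G ((0:ℝ), (0:ℝ)) = F (0, 0) := by
    rw [hGnat ((0:ℝ), (0:ℝ)), ← hstar' ((0:ℝ), (0:ℝ))]
    refine Finset.sum_congr rfl fun γ _ => ?_
    rw [habs00, Real.arccos_zero]
  have hGP : ∀ r ∈ Set.Icc (0:ℝ) 1, ∀ θ ∈ Set.Ioc (-Real.pi) Real.pi,
      G (r * Real.cos θ, r * Real.sin θ) = P (r, θ) := by
    intro r hr θ hθ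
    by_cases hr0 : r = 0
    · subst hr0
      have h00 : ((0:ℝ) * Real.cos θ, (0:ℝ) * Real.sin θ) = ((0:ℝ), (0:ℝ)) := by simp
      rw [h00, hG0, hpart1 θ]
    · have hzq : zc (r * Real.cos θ, r * Real.sin θ)
          = (r : ℂ) * Complex.exp ((θ : ℝ) * Complex.I) := by
        rw [hzc]
        dsimp only
        rw [Complex.exp_mul_I]
        push_cast
        ring
      have habs : ‖zc (r * Real.cos θ, r * Real.sin θ)‖ = r := by
        rw [hzq, norm_mul, Complex.norm_exp_ofReal_mul_I, Complex.norm_real, Real.norm_eq_abs,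
          _root_.abs_of_nonneg hr.1, mul_one]
      have hzne : zc (r * Real.cos θ, r * Real.sin θ) ≠ 0 := by
        rw [hzq]
        exact mul_ne_zero (Complex.ofReal_ne_zero.mpr hr0) (Complex.exp_ne_zero _)
      have huq : u (r * Real.cos θ, r * Real.sin θ) = Complex.exp ((θ : ℝ) * Complex.I) := by
        simp only [hu, if_neg hzne]
        rw [habs, hzq, mul_comm, mul_div_assoc,
          div_self (Complex.ofReal_ne_zero.mpr hr0), mul_one]
      rw [hGnat, habs, hP (r, θ)]
      refine Finset.sum_congr rfl fun γ _ => ?_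
      rw [huq, ← Complex.exp_int_mul]
      have he : Complex.exp ((γ.2 : ℂ) * ((θ : ℝ) * Complex.I))
          = Complex.exp (Complex.I * ((γ.2 : ℂ) * (θ : ℝ))) := by
        congr 1
        ring
      rw [he]
      simp only [Xfun]
      ring
  have hGcont : Continuous G := by
    rw [continuous_iff_continuousAt]
    intro p
    by_cases hp : zc p = 0
    · have hp0 : p = ((0:ℝ), (0:ℝ)) := by
        have h1 : p.1 = 0 ∧ p.2 = 0 := by
          rw [hzc] at hp
          simpa [Complex.ext_iff] using hp
        exact Prod.ext h1.1 h1.2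
      rw [hp0]
      show Filter.Tendsto G (nhds ((0:ℝ), (0:ℝ))) (nhds (G ((0:ℝ), (0:ℝ))))
      rw [hG0]
      have hsum0 : Filter.Tendsto (fun q : ℝ × ℝ => ∑ γ ∈ GammaSq m₁ m₂,
          c γ * ((Real.cos (γ.1 * Real.arccos (‖zc q‖))
            - Real.cos (γ.1 * (Real.pi / 2)) : ℝ) : ℂ) * u q ^ γ.2)
          (nhds ((0:ℝ), (0:ℝ))) (nhds 0) := by
        have h0 : (0 : ℂ) = ∑ _γ ∈ GammaSq m₁ m₂, (0 : ℂ) := by simp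
        rw [h0]
        refine tendsto_finset_sum _ fun γ _ => ?_
        apply squeeze_zero_norm (a := fun q : ℝ × ℝ => ‖c γ‖ *
          |Real.cos (γ.1 * Real.arccos (‖zc q‖))
            - Real.cos (γ.1 * (Real.pi / 2))|)
        · intro q
          rw [norm_mul, norm_mul]
          have h1 : ‖u q ^ γ.2‖ = 1 := by
            rw [norm_zpow, hu_norm q, one_zpow]
          rw [h1, mul_one, Complex.norm_real]
          exact le_of_eq (by rw [Real.norm_eq_abs])
        · have hcont : Continuous fun q : ℝ × ℝ => ‖c γ‖ *
              |Real.cos (γ.1 * Real.arccos (‖zc q‖))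
                - Real.cos (γ.1 * (Real.pi / 2))| :=
            continuous_const.mul ((Real.continuous_cos.comp (continuous_const.mul
              (Real.continuous_arccos.comp
                (continuous_norm.comp hzc_cont)))).sub continuous_const).abs
          have h2 := hcont.tendsto ((0:ℝ), (0:ℝ))
          have hv : ‖c γ‖ * |Real.cos (↑γ.1 * Real.arccos (‖zc ((0:ℝ), (0:ℝ))‖))
              - Real.cos (↑γ.1 * (Real.pi / 2))| = 0 := by
            rw [habs00, Real.arccos_zero, sub_self, abs_zero, mul_zero]
          convert h2 using 2
          rw [hv]
      have h3 := hsum0.const_add (F (0, 0))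
      rw [add_zero] at h3
      rw [hG]
      exact h3
    · have hopen : IsOpen {q : ℝ × ℝ | zc q ≠ 0} :=
        IsOpen.preimage hzc_cont isOpen_compl_singleton
      have habs_ne : (‖zc p‖ : ℂ) ≠ 0 :=
        Complex.ofReal_ne_zero.mpr (norm_ne_zero_iff.mpr hp)
      have hGood : ContinuousAt (fun q : ℝ × ℝ => F (0, 0) + ∑ γ ∈ GammaSq m₁ m₂,
          c γ * ((Real.cos (γ.1 * Real.arccos (‖zc q‖))
            - Real.cos (γ.1 * (Real.pi / 2)) : ℝ) : ℂ) *
          (zc q / (‖zc q‖ : ℂ)) ^ γ.2) p := by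
        apply ContinuousAt.add continuousAt_const
        have : ContinuousAt (fun q : ℝ × ℝ => ∑ γ ∈ GammaSq m₁ m₂,
            c γ * ((Real.cos (γ.1 * Real.arccos (‖zc q‖))
              - Real.cos (γ.1 * (Real.pi / 2)) : ℝ) : ℂ) *
            (zc q / (‖zc q‖ : ℂ)) ^ γ.2) p := by
          apply tendsto_finset_sum
          intro γ _
          have hwcont : ContinuousAt (fun q : ℝ × ℝ => zc q / (‖zc q‖ : ℂ)) p :=
            hzc_cont.continuousAt.div ((Complex.continuous_ofReal.comp
              (continuous_norm.comp hzc_cont)).continuousAt) habs_ne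
          have hwne : zc p / (‖zc p‖ : ℂ) ≠ 0 := div_ne_zero hp habs_ne
          have hpowq : ContinuousAt
              (fun q : ℝ × ℝ => (zc q / (‖zc q‖ : ℂ)) ^ γ.2) p :=
            hwcont.zpow₀ γ.2 (Or.inl hwne)
          exact (continuousAt_const.mul ((Complex.continuous_ofReal.comp
            ((Real.continuous_cos.comp (continuous_const.mul
              (Real.continuous_arccos.comp
                (continuous_norm.comp hzc_cont)))).sub
              continuous_const)).continuousAt)).mul hpowq
        exact this
      refine hGood.congr ?_
      filter_upwards [hopen.mem_nhds hp] with q hq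
      simp only [hG, hu]
      congr 1
      refine Finset.sum_congr rfl fun γ _ => ?_
      rw [if_neg hq]
  exact ⟨fun θ _ => hpart1 θ, G, hGcont.continuousOn, hGP⟩
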